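/- Suppose a family of bounded operators U(t) on function spaces over ℝ satisfies, for 0 < |t| ≤ δ: ‖U(t)f‖_{L^∞} ≤ c|t|^{-1/2}‖f‖_{L¹}, ‖U(t)f‖_{L²} = ‖f‖_{L²}, U(t) is invertible with inverse U(-t), and both U(t), U(-t) are bounded on L^p(ℝ) for some p ∈ (2, ∞]. Then the inequality ‖f‖_{L^p} ≲ |t|^{-(1/p' - 1/p)/2·1}‖f‖_{L^{p'}} holds for all Schwartz f (with 1/p' + 1/p = 1), which contradicts the failure of the embedding L^{p'}(ℝ) ↪ L^p(ℝ); hence no such p > 2 exists and U(t) is L^p-bounded (with bounded inverse, under these dispersive hypotheses) only for p = 2. -/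

import Mathlib

open MeasureTheory ENNReal

theorem stmt_13 (U : ℝ → (ℝ → ℂ) → (ℝ → ℂ)) (δ c : ℝ) (hδ : 0 < δ) (hc : 0 < c)
    (hdisp : ∀ t : ℝ, 0 < |t| → |t| ≤ δ → ∀ f : ℝ → ℂ,
      eLpNorm (U t f) ⊤ volume ≤ ENNReal.ofReal (c * |t| ^ (-(1/2 : ℝ))) * eLpNorm f 1 volume)
    (hunit : ∀ t : ℝ, 0 < |t| → |t| ≤ δ → ∀ f : ℝ → ℂ,
      eLpNorm (U t f) 2 volume = eLpNorm f 2 volume)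
    (hinv : ∀ t : ℝ, 0 < |t| → |t| ≤ δ → ∀ f : ℝ → ℂ, U (-t) (U t f) = f)
    (p : ℝ) (hp : 2 < p)
    (hbdd : ∃ Cp : ℝ, ∀ t : ℝ, 0 < |t| → |t| ≤ δ → ∀ f : ℝ → ℂ,
      eLpNorm (U t f) (ENNReal.ofReal p) volume
        ≤ ENNReal.ofReal Cp * eLpNorm f (ENNReal.ofReal p) volume ∧
      eLpNorm (U (-t) f) (ENNReal.ofReal p) volume
        ≤ ENNReal.ofReal Cp * eLpNorm f (ENNReal.ofReal p) volume) :
    False := by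
  obtain ⟨Cp, hCp⟩ := hbdd
  have hp0 : (0:ℝ) < p := by linarith
  have hδabs : |δ| = δ := abs_of_pos hδ
  have htpos : 0 < |δ| := by rw [hδabs]; exact hδ
  have htle : |δ| ≤ δ := le_of_eq hδabs
  set a : ℝ := c * δ ^ (-(1/2:ℝ)) with ha
  have hapos : 0 < a := mul_pos hc (Real.rpow_pos_of_pos hδ _)
  set K : ℝ := max Cp 1 with hK
  have hK1 : (1:ℝ) ≤ K := le_max_right _ _
  have hKpos : (0:ℝ) < K := lt_of_lt_of_le one_pos hK1
  set θ : ℝ := (p-2)/p with hθdef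
  have hθ : 0 < θ := div_pos (by linarith) hp0
  -- the key inequality, for every R > 0
  have key : ∀ R : ℝ, 0 < R → (1:ℝ) ≤ K * (a*R) ^ θ := by
    intro R hR
    set f : ℝ → ℂ := (Set.Ioc (0:ℝ) R).indicator (fun _ => (1:ℂ)) with hf
    have hmeas : MeasurableSet (Set.Ioc (0:ℝ) R) := measurableSet_Ioc
    set X : ℝ≥0∞ := ENNReal.ofReal R with hXdef
    have hvol : volume (Set.Ioc (0:ℝ) R) = X := by
      rw [Real.volume_Ioc, sub_zero]
    have hX0 : X ≠ 0 := by
      simp [hXdef, ENNReal.ofReal_eq_zero, not_le, hR]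
    have hXtop : X ≠ ⊤ := ENNReal.ofReal_ne_top
    set P : ℝ≥0∞ := ENNReal.ofReal p with hPdef
    have hP0 : P ≠ 0 := by
      simp [hPdef, ENNReal.ofReal_eq_zero, not_le, hp0]
    have hPtop : P ≠ ⊤ := ENNReal.ofReal_ne_top
    have hPto : P.toReal = p := ENNReal.toReal_ofReal hp0.le
    -- norms of f
    have hf1 : eLpNorm f 1 volume = X := by
      rw [hf, eLpNorm_indicator_const hmeas one_ne_zero ENNReal.one_ne_top, hvol]
      simp
    have hf2 : eLpNorm f 2 volume = X ^ ((1:ℝ)/2) := by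
      rw [hf, eLpNorm_indicator_const hmeas (by norm_num) (by norm_num), hvol]
      simp [ENNReal.toReal_ofNat]
    have hfP : eLpNorm f P volume = X ^ ((1:ℝ)/p) := by
      rw [hf, eLpNorm_indicator_const hmeas hP0 hPtop, hvol, hPto]
      simp
    set g : ℝ → ℂ := U δ f with hg
    -- L² norm of g
    have h2g : eLpNorm g 2 volume = X ^ ((1:ℝ)/2) := by
      rw [hg, hunit δ htpos htle f, hf2]
    -- ∫ ‖g‖² = X
    set N2 : ℝ≥0∞ := ∫⁻ x, ((‖g x‖₊ : ℝ≥0∞)) ^ (2:ℝ) with hN2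
    have h2g' : eLpNorm g 2 volume = N2 ^ ((1:ℝ)/2) := by
      rw [eLpNorm_eq_lintegral_rpow_enorm_toReal (by norm_num) (by norm_num)]
      simp [hN2, ENNReal.toReal_ofNat, enorm_eq_nnnorm]
    have hN2X : N2 = X := by
      have h : N2 ^ ((1:ℝ)/2) = X ^ ((1:ℝ)/2) := h2g'.symm.trans h2g
      have h2 : (N2 ^ ((1:ℝ)/2)) ^ (2:ℝ) = (X ^ ((1:ℝ)/2)) ^ (2:ℝ) := by rw [h]
      rw [← ENNReal.rpow_mul, ← ENNReal.rpow_mul] at h2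
      norm_num at h2
      exact h2
    -- L^∞ bound on g
    have hM : eLpNorm g ⊤ volume ≤ ENNReal.ofReal a * X := by
      have h := hdisp δ htpos htle f
      rwa [hδabs, hf1, ← ha] at h
    set SA : ℝ≥0∞ := ENNReal.ofReal a * X with hSA
    have hSAtop : SA ≠ ⊤ := ENNReal.mul_ne_top ENNReal.ofReal_ne_top hXtop
    -- pointwise a.e. bound
    have hpt : ∀ᵐ x ∂(volume : Measure ℝ),
        ((‖g x‖₊ : ℝ≥0∞)) ^ (p:ℝ) ≤ SA ^ (p-2) * ((‖g x‖₊ : ℝ≥0∞)) ^ (2:ℝ) := by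
      filter_upwards [enorm_ae_le_eLpNormEssSup g volume] with x hx
      have hx' : ((‖g x‖₊ : ℝ≥0∞)) ≤ SA := by
        refine le_trans hx ?_
        have : eLpNormEssSup g volume = eLpNorm g ⊤ volume := by
          simp [eLpNorm_exponent_top]
        rw [this]; exact hM
      calc ((‖g x‖₊ : ℝ≥0∞)) ^ (p:ℝ)
          = ((‖g x‖₊ : ℝ≥0∞)) ^ ((p-2) + 2) := by norm_num
        _ = ((‖g x‖₊ : ℝ≥0∞)) ^ (p-2) * ((‖g x‖₊ : ℝ≥0∞)) ^ (2:ℝ) :=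
            ENNReal.rpow_add_of_nonneg _ _ (by linarith) (by norm_num)
        _ ≤ SA ^ (p-2) * ((‖g x‖₊ : ℝ≥0∞)) ^ (2:ℝ) :=
            mul_le_mul_left (ENNReal.rpow_le_rpow hx' (by linarith)) _
    -- integral bound
    have hIp : (∫⁻ x, ((‖g x‖₊ : ℝ≥0∞)) ^ (p:ℝ)) ≤ SA ^ (p-2) * X := by
      calc (∫⁻ x, ((‖g x‖₊ : ℝ≥0∞)) ^ (p:ℝ))
          ≤ ∫⁻ x, SA ^ (p-2) * ((‖g x‖₊ : ℝ≥0∞)) ^ (2:ℝ) := lintegral_mono_ae hpt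
        _ = SA ^ (p-2) * N2 := lintegral_const_mul' _ _
            (ENNReal.rpow_ne_top_of_nonneg (by linarith) hSAtop)
        _ = SA ^ (p-2) * X := by rw [hN2X]
    -- L^p bound on g
    have hgP : eLpNorm g P volume ≤ SA ^ θ * X ^ ((1:ℝ)/p) := by
      rw [eLpNorm_eq_lintegral_rpow_enorm_toReal hP0 hPtop, hPto]
      calc (∫⁻ x, ((‖g x‖₊ : ℝ≥0∞)) ^ (p:ℝ)) ^ ((1:ℝ)/p)
          ≤ (SA ^ (p-2) * X) ^ ((1:ℝ)/p) :=
            ENNReal.rpow_le_rpow hIp (by positivity)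
        _ = SA ^ θ * X ^ ((1:ℝ)/p) := by
            rw [ENNReal.mul_rpow_of_nonneg _ _ (by positivity), ← ENNReal.rpow_mul]
            congr 1
            rw [hθdef]
            field_simp
    -- chain: X^(1/p) ≤ Cp * SA^θ * X^(1/p)
    have hchain : X ^ ((1:ℝ)/p) ≤ (ENNReal.ofReal Cp * SA ^ θ) * X ^ ((1:ℝ)/p) := by
      have h1 : eLpNorm f P volume = eLpNorm (U (-δ) g) P volume := by
        rw [hg, hinv δ htpos htle f]
      calc X ^ ((1:ℝ)/p) = eLpNorm (U (-δ) g) P volume := by rw [← h1, hfP]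
        _ ≤ ENNReal.ofReal Cp * eLpNorm g P volume := (hCp δ htpos htle g).2
        _ ≤ ENNReal.ofReal Cp * (SA ^ θ * X ^ ((1:ℝ)/p)) := by gcongr
        _ = (ENNReal.ofReal Cp * SA ^ θ) * X ^ ((1:ℝ)/p) := by ring
    -- cancel X^(1/p)
    have hXp0 : X ^ ((1:ℝ)/p) ≠ 0 := by
      simp [ENNReal.rpow_eq_zero_iff, hX0, hXtop]
    have hXptop : X ^ ((1:ℝ)/p) ≠ ⊤ := by
      exact ENNReal.rpow_ne_top_of_nonneg (by positivity) hXtop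
    have hone : (1:ℝ≥0∞) ≤ ENNReal.ofReal Cp * SA ^ θ := by
      have h1 : (1:ℝ≥0∞) * X ^ ((1:ℝ)/p) ≤ (ENNReal.ofReal Cp * SA ^ θ) * X ^ ((1:ℝ)/p) := by
        rw [one_mul]; exact hchain
      exact (ENNReal.mul_le_mul_iff_left hXp0 hXptop).mp h1
    -- convert to reals
    have hSAval : SA ^ θ = ENNReal.ofReal ((a*R) ^ θ) := by
      rw [hSA, hXdef, ← ENNReal.ofReal_mul hapos.le,
        ← ENNReal.ofReal_rpow_of_pos (mul_pos hapos hR)]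
    have hone' : (1:ℝ≥0∞) ≤ ENNReal.ofReal (K * (a*R) ^ θ) := by
      calc (1:ℝ≥0∞) ≤ ENNReal.ofReal Cp * SA ^ θ := hone
        _ ≤ ENNReal.ofReal K * ENNReal.ofReal ((a*R) ^ θ) := by
            rw [hSAval]; gcongr
            exact le_max_left Cp 1
        _ = ENNReal.ofReal (K * (a*R) ^ θ) := by
            rw [← ENNReal.ofReal_mul hKpos.le]
    exact ENNReal.one_le_ofReal.mp hone'
  -- choose R small to contradict
  set R : ℝ := a⁻¹ * ((2*K)⁻¹) ^ θ⁻¹ with hR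
  have hRpos : 0 < R := by
    apply mul_pos (inv_pos.mpr hapos)
    exact Real.rpow_pos_of_pos (by positivity) _
  have haR : a * R = ((2*K)⁻¹) ^ θ⁻¹ := by
    rw [hR]; field_simp
  have hval : (a*R) ^ θ = (2*K)⁻¹ := by
    rw [haR, ← Real.rpow_mul (by positivity), inv_mul_cancel₀ (ne_of_gt hθ), Real.rpow_one]
  have h := key R hRpos
  rw [hval] at h
  have : K * (2*K)⁻¹ = 1/2 := by field_simp
  rw [this] at h
  linarith
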